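/- Let m ≤ n be positive integers and γ = (a_1,…,a_m) ∈ Γ(m,n) with γ ≠ (n−m+1,…,n), with block data k(0),…,k(t+1), tuples ζ_0,…,ζ_t and σ_1,…,σ_t, integers κ_0,…,κ_t, κ, κ', and sets S_h, T_h, U_h. Then for every h with 1 ≤ h ≤ κ−κ', the following two subsets of Γ(m,n) coincide: {β ∈ Γ(m,n) : β ≥ γ and β ≱ σ_k for every k ∈ U_h} and {ξ ⊔ ν : ξ, ν ∈ Γ(m,n), ξ ≥ γ, ν ≥ γ, ξ ≱ ζ_i for every i ∈ S_h, and ν ≱ ζ_j for every j ∈ T_h}. -/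

import Mathlib

open scoped BigOperators TensorProduct

set_option maxHeartbeats 1000000
set_option synthInstance.maxHeartbeats 400000

noncomputable section

/-- The trace ideal of an `R`-module `M`: the sum of the images of all
`R`-linear maps `M → R`. -/
def traceIdeal (R : Type*) [CommRing R] (M : Type*) [AddCommGroup M] [Module R M] :
    Ideal R :=
  ⨆ f : M →ₗ[R] R, LinearMap.range f

/-- `Γ(m,N)`: strictly increasing `m`-tuples with entries in `{1,…,N}`,
encoded as functions `Fin m → ℕ` and ordered componentwise. -/
def GammaSet (m N : ℕ) : Set (Fin m → ℕ) :=
  {a | StrictMono a ∧ ∀ i, 1 ≤ a i ∧ a i ≤ N}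

/-- Extended entries of a tuple `a ∈ Γ(m,N)`: `aext j = a_j` for `1 ≤ j ≤ m`
(1-based indexing) and `aext (m+1) = N+1`. -/
def aext (m N : ℕ) (a : Fin m → ℕ) (j : ℕ) : ℕ :=
  if h : j - 1 < m then a ⟨j - 1, h⟩ else N + 1

/-- Block data for `γ ∈ Γ(m,N)`: `k 0 = 0`, `k` is strictly increasing on
`{0,…,t+1}` and `k 1 < ⋯ < k (t+1)` lists exactly the indices `j ∈ {1,…,m}`
with `a_{j+1} - a_j > 1` (where `a_{m+1} = N+1`). -/
def IsBlockData (m N : ℕ) (a : Fin m → ℕ) (t : ℕ) (k : ℕ → ℕ) : Prop :=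
  k 0 = 0 ∧ (∀ i j, i < j → j ≤ t + 1 → k i < k j) ∧
    ∀ j, (∃ i, 1 ≤ i ∧ i ≤ t + 1 ∧ k i = j) ↔
      (1 ≤ j ∧ j ≤ m ∧ 1 < aext m N a (j + 1) - aext m N a j)

/-- `ζ_i`: the tuple `γ` with the entry `a_{k(i+1)}` replaced by `a_{k(i+1)} + 1`. -/
def zetaT (m : ℕ) (a : Fin m → ℕ) (k : ℕ → ℕ) (i : ℕ) : Fin m → ℕ :=
  fun j => if (j : ℕ) + 1 = k (i + 1) then a j + 1 else a j

/-- `σ_i`: the strictly increasing tuple whose entry set is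
`({a_1,…,a_m} ∖ {a_{k(i)}}) ∪ {a_{k(i+1)} + 1}`. -/
def sigmaT (m N : ℕ) (a : Fin m → ℕ) (k : ℕ → ℕ) (i : ℕ) : Fin m → ℕ :=
  fun j =>
    if (j : ℕ) + 1 < k i then a j
    else if (j : ℕ) + 1 < k (i + 1) then aext m N a ((j : ℕ) + 2)
    else if (j : ℕ) + 1 = k (i + 1) then a j + 1
    else a j

/-- `κ_i = Σ_{j=0}^{i} (k(j+1) − k(j)) + Σ_{j=i}^{t} (a_{k(j+1)+1} − a_{k(j+1)} − 1)`. -/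
def kappaT (m N : ℕ) (a : Fin m → ℕ) (t : ℕ) (k : ℕ → ℕ) (i : ℕ) : ℕ :=
  (∑ j ∈ Finset.range (i + 1), (k (j + 1) - k j)) +
    ∑ j ∈ Finset.Icc i t, (aext m N a (k (j + 1) + 1) - aext m N a (k (j + 1)) - 1)

/-- `κ = max_{0 ≤ i ≤ t} κ_i`. -/
def kappaMax (m N : ℕ) (a : Fin m → ℕ) (t : ℕ) (k : ℕ → ℕ) : ℕ :=
  (Finset.range (t + 1)).sup (kappaT m N a t k)

/-- `κ' = min_{0 ≤ i ≤ t} κ_i`. -/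
def kappaMin (m N : ℕ) (a : Fin m → ℕ) (t : ℕ) (k : ℕ → ℕ) : ℕ :=
  (Finset.range (t + 1)).inf' (Finset.nonempty_range_iff.mpr (Nat.succ_ne_zero t))
    (kappaT m N a t k)

/-- `i ∈ S_h`, i.e. `κ − κ_i ≥ h`. -/
def memS (m N : ℕ) (a : Fin m → ℕ) (t : ℕ) (k : ℕ → ℕ) (h i : ℕ) : Prop :=
  h ≤ kappaMax m N a t k - kappaT m N a t k i

/-- `i ∈ U_h`: `1 ≤ i ≤ t` and exactly one of `i-1`, `i` belongs to `S_h`. -/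
def memU (m N : ℕ) (a : Fin m → ℕ) (t : ℕ) (k : ℕ → ℕ) (h i : ℕ) : Prop :=
  1 ≤ i ∧ i ≤ t ∧ ¬ (memS m N a t k h i ↔ memS m N a t k h (i - 1))

/-- The maximal minor `[a]` of the generic `m × n` matrix `(X_{uv})`
(rows `1,…,m`, columns `a_1,…,a_m`), inside `B[X_{ij} : i,j ≥ 1]`. -/
def minor (B : Type*) [CommRing B] (m : ℕ) (a : Fin m → ℕ) : MvPolynomial (ℕ × ℕ) B :=
  (Matrix.of fun u v : Fin m => MvPolynomial.X ((u : ℕ) + 1, a v)).det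

/-- `G_B(X)`: the `B`-subalgebra generated by all maximal minors `[a]`, `a ∈ Γ(m,n)`. -/
def schubertAlgebra (B : Type*) [CommRing B] (m n : ℕ) :
    Subalgebra B (MvPolynomial (ℕ × ℕ) B) :=
  Algebra.adjoin B ((fun a => minor B m a) '' GammaSet m n)

lemma minor_mem (B : Type*) [CommRing B] (m n : ℕ) {a : Fin m → ℕ}
    (ha : a ∈ GammaSet m n) : minor B m a ∈ schubertAlgebra B m n :=
  Algebra.subset_adjoin ⟨a, ha, rfl⟩

/-- `J_B(X; γ)`: the ideal of `G_B(X)` generated by all `[δ]` with `δ ≱ γ`. -/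
def JIdeal (B : Type*) [CommRing B] (m n : ℕ) (γ : Fin m → ℕ) :
    Ideal (schubertAlgebra B m n) :=
  Ideal.span {x | ∃ a ∈ GammaSet m n, ¬ γ ≤ a ∧
    (x : MvPolynomial (ℕ × ℕ) B) = minor B m a}

/-- The Schubert cycle `G_B(X; γ) = G_B(X)/J_B(X;γ)`. -/
abbrev SchubertCycle (B : Type*) [CommRing B] (m n : ℕ) (γ : Fin m → ℕ) :=
  schubertAlgebra B m n ⧸ JIdeal B m n γ

/-- `J_B(x; δ) = J_B(X;δ)/J_B(X;γ)`, an ideal of `G_B(X;γ)`. -/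
def JxIdeal (B : Type*) [CommRing B] (m n : ℕ) (γ δ : Fin m → ℕ) :
    Ideal (SchubertCycle B m n γ) :=
  (JIdeal B m n δ).map (Ideal.Quotient.mk (JIdeal B m n γ))

end

section AuxBV

variable {m n t : ℕ} {γ : Fin m → ℕ} {k : ℕ → ℕ}

lemma BVaext_eq {m : ℕ} (N : ℕ) (a : Fin m → ℕ) {J : ℕ} (h2 : J - 1 < m) :
    aext m N a J = a ⟨J - 1, h2⟩ := dif_pos h2

/-- strict monotonicity from adjacent comparisons -/
lemma BVstrictMono_of_adj {m : ℕ} {f : Fin m → ℕ}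
    (hf : ∀ p q : Fin m, (q : ℕ) = (p : ℕ) + 1 → f p < f q) : StrictMono f := by
  have key : ∀ (d : ℕ) (p q : Fin m), (q : ℕ) = (p : ℕ) + d + 1 → f p < f q := by
    intro d
    induction d with
    | zero => exact fun p q hq => hf p q hq
    | succ d ih =>
      intro p q hq
      have hmid : (p : ℕ) + d + 1 < m := by have := q.isLt; omega
      exact (ih p ⟨(p : ℕ) + d + 1, hmid⟩ rfl).trans (hf _ q (by simp; omega))
  intro p q hpq
  have hpq' : (p : ℕ) < (q : ℕ) := hpq
  exact key ((q : ℕ) - (p : ℕ) - 1) p q (by omega)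

lemma BVkpos (hbd : IsBlockData m n γ t k) {i : ℕ} (hi1 : 1 ≤ i) (hi2 : i ≤ t + 1) :
    1 ≤ k i ∧ k i ≤ m ∧ 1 < aext m n γ (k i + 1) - aext m n γ (k i) :=
  (hbd.2.2 (k i)).mp ⟨i, hi1, hi2, rfl⟩

lemma BVkmono (hbd : IsBlockData m n γ t k) {i j : ℕ} (hij : i ≤ j) (hj : j ≤ t + 1) :
    k i ≤ k j := by
  rcases eq_or_lt_of_le hij with rfl | hlt
  · exact le_rfl
  · exact (hbd.2.1 i j hlt hj).le

lemma BVaext_lt (hγ : γ ∈ GammaSet m n) {J : ℕ} (hJ1 : 1 ≤ J) (hJ2 : J ≤ m) :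
    aext m n γ J < aext m n γ (J + 1) := by
  have hJm : J - 1 < m := by omega
  rw [BVaext_eq n γ hJm]
  rcases lt_or_eq_of_le hJ2 with hlt | rfl
  · have h2 : (J + 1) - 1 < m := by omega
    rw [BVaext_eq n γ h2]
    exact hγ.1 (show (⟨J - 1, hJm⟩ : Fin m) < ⟨(J + 1) - 1, h2⟩ by
      simp [Fin.lt_def]; omega)
  · have h2 : ¬ ((J + 1) - 1 < J) := by omega
    rw [aext, dif_neg h2]
    have := (hγ.2 ⟨J - 1, hJm⟩).2
    omega

/-- within a block, consecutive entries differ by exactly 1 -/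
lemma BVconsec (hγ : γ ∈ GammaSet m n) (hbd : IsBlockData m n γ t k)
    {i J : ℕ} (hit : i ≤ t) (hJ1 : k i < J) (hJ2 : J < k (i + 1)) :
    aext m n γ (J + 1) = aext m n γ J + 1 := by
  have hk := BVkpos hbd (show 1 ≤ i + 1 by omega) (by omega)
  have hJm : J ≤ m := by omega
  have hJ1' : 1 ≤ J := by omega
  have hlt := BVaext_lt hγ hJ1' hJm
  have hnot : ¬ (1 < aext m n γ (J + 1) - aext m n γ J) := by
    intro hgap
    obtain ⟨l, hl1, hl2, hlJ⟩ := (hbd.2.2 J).mpr ⟨hJ1', hJm, hgap⟩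
    rcases le_or_gt l i with h' | h'
    · have := BVkmono hbd h' (by omega)
      omega
    · have : k (i + 1) ≤ k l := BVkmono hbd (by omega) hl2
      omega
  omega

/-- Key lemma: if `β ≥ γ` is strictly increasing with `β_{k i} ≥ a_{k i + 1}`
then `σ_i ≤ β`. -/
lemma BVsigma_le (hγ : γ ∈ GammaSet m n) (hbd : IsBlockData m n γ t k)
    {β : Fin m → ℕ} (hβm : StrictMono β) (hγβ : γ ≤ β) {i : ℕ}
    (hi1 : 1 ≤ i) (hi2 : i ≤ t)
    (hkey : aext m n γ (k i + 1) ≤ aext m n β (k i)) :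
    sigmaT m n γ k i ≤ β := by
  have hk1 := BVkpos hbd hi1 (by omega)
  have hk2 := BVkpos hbd (show 1 ≤ i + 1 by omega) (by omega)
  have hkk : k i < k (i + 1) := hbd.2.1 i (i + 1) (by omega) (by omega)
  have claimd : ∀ d, k i + d < k (i + 1) →
      aext m n γ (k i + d + 1) ≤ aext m n β (k i + d) := by
    intro d
    induction d with
    | zero => intro _; simpa using hkey
    | succ d ih =>
      intro hd
      have ih' := ih (by omega)
      have hco : aext m n γ (k i + d + 1 + 1) = aext m n γ (k i + d + 1) + 1 :=
        BVconsec hγ hbd hi2 (by omega) (by omega)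
      have hβlt : aext m n β (k i + d) < aext m n β (k i + d + 1) := by
        have hm1 : (k i + d) - 1 < m := by omega
        have hm2 : (k i + d + 1) - 1 < m := by omega
        rw [BVaext_eq n β hm1, BVaext_eq n β hm2]
        exact hβm (show (⟨(k i + d) - 1, hm1⟩ : Fin m) < ⟨(k i + d + 1) - 1, hm2⟩ by
          simp [Fin.lt_def]; omega)
      have : k i + (d + 1) + 1 = (k i + d + 1) + 1 := by omega
      rw [this, hco]
      have : k i + (d + 1) = k i + d + 1 := by omega
      rw [this]
      omega
  have claimJ : ∀ J, k i ≤ J → J < k (i + 1) →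
      aext m n γ (J + 1) ≤ aext m n β J := by
    intro J hJ1 hJ2
    have := claimd (J - k i) (by omega)
    have e : k i + (J - k i) = J := by omega
    rwa [e] at this
  intro j
  have hjm := j.isLt
  simp only [sigmaT]
  split_ifs with hc1 hc2 hc3
  · exact hγβ j
  · have hc1' : k i ≤ (j : ℕ) + 1 := by omega
    have := claimJ ((j : ℕ) + 1) hc1' hc2
    have hm2 : ((j : ℕ) + 1) - 1 < m := by omega
    rw [BVaext_eq n β hm2] at this
    have e : (⟨((j : ℕ) + 1) - 1, hm2⟩ : Fin m) = j := Fin.ext (by simp)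
    rw [e] at this
    have e2 : (j : ℕ) + 1 + 1 = (j : ℕ) + 2 := by omega
    rwa [e2] at this
  · -- (j:ℕ)+1 = k (i+1)
    have hJ2 : 2 ≤ (j : ℕ) + 1 := by omega
    have hprev := claimJ ((j : ℕ)) (by omega) (by omega)
    have hm1 : (j : ℕ) - 1 < m := by omega
    rw [BVaext_eq n β hm1] at hprev
    have hm0 : ((j : ℕ) + 1) - 1 < m := j.isLt
    rw [show (j:ℕ) + 1 = (j:ℕ) + 1 from rfl] at hprev
    have hγj : aext m n γ ((j : ℕ) + 1) = γ j := by
      rw [BVaext_eq n γ hm0]; exact congrArg γ (Fin.ext (by simp))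
    rw [hγj] at hprev
    have hβstep : β ⟨(j : ℕ) - 1, hm1⟩ < β j :=
      hβm (show (⟨(j : ℕ) - 1, hm1⟩ : Fin m) < j by simp [Fin.lt_def]; omega)
    omega
  · exact hγβ j

lemma BVsigma_key (hbd : IsBlockData m n γ t k) {β : Fin m → ℕ} {i : ℕ}
    (hi1 : 1 ≤ i) (hi2 : i ≤ t) (hs : sigmaT m n γ k i ≤ β) :
    aext m n γ (k i + 1) ≤ aext m n β (k i) := by
  have hk := BVkpos hbd hi1 (by omega)
  have hkk : k i < k (i + 1) := hbd.2.1 i (i + 1) (by omega) (by omega)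
  have hjm : k i - 1 < m := by omega
  set j : Fin m := ⟨k i - 1, hjm⟩ with hj
  have hjv : (j : ℕ) + 1 = k i := by simp [hj]; omega
  have := hs j
  simp only [sigmaT] at this
  rw [if_neg (by omega), if_pos (by omega)] at this
  rw [BVaext_eq n β hjm]
  have e : (j : ℕ) + 2 = k i + 1 := by omega
  rw [e] at this
  exact this

lemma BVzeta_le_iff (hbd : IsBlockData m n γ t k) {β : Fin m → ℕ}
    (hγβ : γ ≤ β) {i : ℕ} (hi : i ≤ t) :
    zetaT m γ k i ≤ β ↔
      aext m n γ (k (i + 1)) + 1 ≤ aext m n β (k (i + 1)) := by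
  have hk := BVkpos hbd (show 1 ≤ i + 1 by omega) (by omega)
  have hjm : k (i + 1) - 1 < m := by omega
  rw [BVaext_eq n γ hjm, BVaext_eq n β hjm]
  constructor
  · intro hz
    have := hz ⟨k (i + 1) - 1, hjm⟩
    simp only [zetaT] at this
    rw [if_pos (by omega)] at this
    exact this
  · intro hkey j
    simp only [zetaT]
    split_ifs with hc
    · have e : (⟨k (i + 1) - 1, hjm⟩ : Fin m) = j := Fin.ext (by simp; omega)
      rw [e] at hkey
      exact hkey
    · exact hγβ j

lemma BVzeta_of_sigma (hbd : IsBlockData m n γ t k) {β : Fin m → ℕ}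
    (hγβ : γ ≤ β) {i : ℕ} (hi1 : 1 ≤ i) (hi2 : i ≤ t)
    (hs : sigmaT m n γ k i ≤ β) :
    zetaT m γ k (i - 1) ≤ β ∧ zetaT m γ k i ≤ β := by
  have hk := BVkpos hbd hi1 (by omega)
  have hk2 := BVkpos hbd (show 1 ≤ i + 1 by omega) (by omega)
  have hkk : k i < k (i + 1) := hbd.2.1 i (i + 1) (by omega) (by omega)
  have hkey := BVsigma_key hbd hi1 hi2 hs
  constructor
  · rw [BVzeta_le_iff hbd hγβ (show i - 1 ≤ t by omega)]
    have e : i - 1 + 1 = i := by omega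
    rw [e]
    have gap := hk.2.2
    have hlt : aext m n γ (k i) < aext m n γ (k i + 1) := by omega
    omega
  · rw [BVzeta_le_iff hbd hγβ hi2]
    have hjm : k (i + 1) - 1 < m := by omega
    set j : Fin m := ⟨k (i + 1) - 1, hjm⟩ with hj
    have hjv : (j : ℕ) + 1 = k (i + 1) := by simp [hj]; omega
    have := hs j
    simp only [sigmaT] at this
    rw [if_neg (by omega), if_neg (by omega), if_pos (by omega)] at this
    rw [BVaext_eq n γ hjm, BVaext_eq n β hjm]
    exact this

/-- membership in a block with property `P` -/
def BVin (k : ℕ → ℕ) (t : ℕ) (P : ℕ → Prop) (J : ℕ) : Prop :=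
  ∃ i, i ≤ t ∧ k i < J ∧ J ≤ k (i + 1) ∧ P i

open Classical in
/-- mixed tuple: `γ` on blocks satisfying `Q`, `β` elsewhere -/
noncomputable def BVmix {m : ℕ} (γ β : Fin m → ℕ) (Q : ℕ → Prop) : Fin m → ℕ :=
  fun j => if Q ((j : ℕ) + 1) then γ j else β j

lemma BVblock_eq (hbd : IsBlockData m n γ t k) {i i' J : ℕ}
    (hi : i ≤ t) (hi' : i' ≤ t) (ha1 : k i < J) (ha2 : J ≤ k (i + 1))
    (hb1 : k i' < J) (hb2 : J ≤ k (i' + 1)) : i = i' := by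
  by_contra hne
  rcases lt_or_gt_of_ne hne with hlt | hlt
  · have : k (i + 1) ≤ k i' := BVkmono hbd (by omega) (by omega)
    omega
  · have : k (i' + 1) ≤ k i := BVkmono hbd (by omega) (by omega)
    omega

lemma BVmix_props (hγ : γ ∈ GammaSet m n) (hbd : IsBlockData m n γ t k)
    {h' : ℕ} (P : ℕ → Prop) {β : Fin m → ℕ} (hβ : β ∈ GammaSet m n) (hγβ : γ ≤ β)
    (hσ : ∀ j, memU m n γ t k h' j → ¬ sigmaT m n γ k j ≤ β)
    (hP : ∀ i, 1 ≤ i → i ≤ t → P i → ¬ P (i - 1) → memU m n γ t k h' i) :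
    BVmix γ β (BVin k t P) ∈ GammaSet m n ∧ γ ≤ BVmix γ β (BVin k t P) ∧
      BVmix γ β (BVin k t P) ≤ β ∧
      ∀ i, i ≤ t → P i → ¬ zetaT m γ k i ≤ BVmix γ β (BVin k t P) := by
  classical
  set ξ := BVmix γ β (BVin k t P) with hξdef
  have hle : γ ≤ ξ := by
    intro j
    simp only [hξdef, BVmix]
    split_ifs
    · exact le_rfl
    · exact hγβ j
  have hleβ : ξ ≤ β := by
    intro j
    simp only [hξdef, BVmix]
    split_ifs
    · exact hγβ j
    · exact le_rfl
  have hmono : StrictMono ξ := by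
    apply BVstrictMono_of_adj
    intro p q hq
    simp only [hξdef, BVmix]
    by_cases hQ1 : BVin k t P ((p : ℕ) + 1) <;>
      by_cases hQ2 : BVin k t P ((q : ℕ) + 1)
    · rw [if_pos hQ1, if_pos hQ2]
      exact hγ.1 (show p < q from Fin.lt_def.2 (by omega))
    · rw [if_pos hQ1, if_neg hQ2]
      exact lt_of_lt_of_le (hγ.1 (show p < q from Fin.lt_def.2 (by omega))) (hγβ q)
    · -- crux boundary case
      rw [if_neg hQ1, if_pos hQ2]
      obtain ⟨i, hit, hki1, hki2, hPi⟩ := hQ2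
      have hki : k i = (p : ℕ) + 1 := by
        by_contra hc
        exact hQ1 ⟨i, hit, by omega, by omega, hPi⟩
      have hi1 : 1 ≤ i := by
        by_contra hc
        have : i = 0 := by omega
        rw [this, hbd.1] at hki
        omega
      have hPi1 : ¬ P (i - 1) := by
        intro hc
        have hk1 : k (i - 1) < k i := hbd.2.1 (i - 1) i (by omega) (by omega)
        have e : i - 1 + 1 = i := by omega
        exact hQ1 ⟨i - 1, by omega, by omega, by rw [e]; omega, hc⟩
      have hU := hP i hi1 hit hPi hPi1
      have hns := hσ i hU
      have hkey : ¬ aext m n γ (k i + 1) ≤ aext m n β (k i) := fun hc =>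
        hns (BVsigma_le hγ hbd hβ.1 hγβ hi1 hit hc)
      have hm1 : k i - 1 < m := by omega
      have hm2 : (k i + 1) - 1 < m := by have := q.isLt; omega
      rw [BVaext_eq n γ hm2, BVaext_eq n β hm1] at hkey
      have e1 : (⟨k i - 1, hm1⟩ : Fin m) = p := Fin.ext (by simp; omega)
      have e2 : (⟨(k i + 1) - 1, hm2⟩ : Fin m) = q := Fin.ext (by simp; omega)
      rw [e1, e2] at hkey
      omega
    · rw [if_neg hQ1, if_neg hQ2]
      exact hβ.1 (show p < q from Fin.lt_def.2 (by omega))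
  refine ⟨⟨hmono, fun j => ?_⟩, hle, hleβ, fun i hit hPi hz => ?_⟩
  · constructor
    · exact le_trans (hγ.2 j).1 (hle j)
    · exact le_trans (hleβ j) (hβ.2 j).2
  · have hk := BVkpos hbd (show 1 ≤ i + 1 by omega) (by omega)
    have hkk : k i < k (i + 1) := hbd.2.1 i (i + 1) (by omega) (by omega)
    have hjm : k (i + 1) - 1 < m := by omega
    set j : Fin m := ⟨k (i + 1) - 1, hjm⟩ with hj
    have hjv : (j : ℕ) + 1 = k (i + 1) := by simp [hj]; omega
    have hQ : BVin k t P ((j : ℕ) + 1) := ⟨i, hit, by omega, by omega, hPi⟩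
    have h1 := hz j
    simp only [zetaT] at h1
    rw [if_pos (by omega)] at h1
    have h2 : ξ j = γ j := by
      simp only [hξdef, BVmix]
      rw [if_pos hQ]
    omega

lemma BVmix_sup (hbd : IsBlockData m n γ t k) (P : ℕ → Prop)
    {β : Fin m → ℕ} (hγβ : γ ≤ β) :
    BVmix γ β (BVin k t P) ⊔ BVmix γ β (BVin k t (fun i => ¬ P i)) = β := by
  classical
  funext j
  rw [Pi.sup_apply]
  simp only [BVmix]
  by_cases hQ : BVin k t P ((j : ℕ) + 1)
  · rw [if_pos hQ]
    have hQ' : ¬ BVin k t (fun i => ¬ P i) ((j : ℕ) + 1) := by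
      rintro ⟨i', hi't, hb1, hb2, hPi'⟩
      obtain ⟨i, hit, ha1, ha2, hPi⟩ := hQ
      exact hPi' (BVblock_eq hbd hi't hit hb1 hb2 ha1 ha2 ▸ hPi)
    rw [if_neg hQ']
    exact sup_eq_right.2 (hγβ j)
  · rw [if_neg hQ]
    split_ifs
    · exact sup_eq_left.2 (hγβ j)
    · exact sup_idem _

end AuxBV

/-- For every `1 ≤ h ≤ κ−κ'`, the set of `β ∈ Γ(m,n)` with
`β ≥ γ` and `β ≱ σ_k` for all `k ∈ U_h` coincides with the set of all `ξ ⊔ ν`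
with `ξ, ν ∈ Γ(m,n)`, `ξ, ν ≥ γ`, `ξ ≱ ζ_i` for `i ∈ S_h` and `ν ≱ ζ_j` for `j ∈ T_h`. -/
theorem not_ge_sigma_set_eq_sup_set {m n : ℕ} (hm : 0 < m) (hmn : m ≤ n)
    (γ : Fin m → ℕ) (hγ : γ ∈ GammaSet m n)
    (hγtop : γ ≠ fun j : Fin m => n - m + 1 + (j : ℕ))
    (t : ℕ) (k : ℕ → ℕ) (hbd : IsBlockData m n γ t k)
    (h : ℕ) (h1 : 1 ≤ h) (h2 : h ≤ kappaMax m n γ t k - kappaMin m n γ t k) :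
    {β | β ∈ GammaSet m n ∧ γ ≤ β ∧
        ∀ j, memU m n γ t k h j → ¬ sigmaT m n γ k j ≤ β} =
    {x | ∃ ξ ∈ GammaSet m n, ∃ ν ∈ GammaSet m n, γ ≤ ξ ∧ γ ≤ ν ∧
        (∀ i, i ≤ t → memS m n γ t k h i → ¬ zetaT m γ k i ≤ ξ) ∧
        (∀ j, j ≤ t → ¬ memS m n γ t k h j → ¬ zetaT m γ k j ≤ ν) ∧
        x = ξ ⊔ ν} := by
  classical
  ext x
  simp only [Set.mem_setOf_eq]
  constructor
  · rintro ⟨hxΓ, hγx, hσ⟩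
    have hmixS := BVmix_props hγ hbd (memS m n γ t k h) hxΓ hγx hσ
      (fun i hi1 hit hPi hPi1 => ⟨hi1, hit, by tauto⟩)
    have hmixT := BVmix_props hγ hbd (fun i => ¬ memS m n γ t k h i) hxΓ hγx hσ
      (fun i hi1 hit hPi hPi1 => ⟨hi1, hit, by tauto⟩)
    refine ⟨BVmix γ x (BVin k t (memS m n γ t k h)), hmixS.1,
      BVmix γ x (BVin k t (fun i => ¬ memS m n γ t k h i)), hmixT.1,
      hmixS.2.1, hmixT.2.1, hmixS.2.2.2, hmixT.2.2.2, ?_⟩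
    exact (BVmix_sup hbd (memS m n γ t k h) hγx).symm
  · rintro ⟨ξ, hξΓ, ν, hνΓ, hγξ, hγν, hξz, hνz, rfl⟩
    have hsupΓ : ξ ⊔ ν ∈ GammaSet m n := by
      refine ⟨fun p q hpq => ?_, fun j => ?_⟩
      · rw [Pi.sup_apply, Pi.sup_apply]
        exact sup_lt_iff.2 ⟨(hξΓ.1 hpq).trans_le le_sup_left,
          (hνΓ.1 hpq).trans_le le_sup_right⟩
      · rw [Pi.sup_apply]
        exact ⟨le_trans (hξΓ.2 j).1 le_sup_left,
          sup_le (hξΓ.2 j).2 (hνΓ.2 j).2⟩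
    refine ⟨hsupΓ, le_trans hγξ le_sup_left, fun j hU hs => ?_⟩
    obtain ⟨hj1, hjt, hiff⟩ := hU
    have hk := BVkpos hbd hj1 (by omega)
    have hkey := BVsigma_key hbd hj1 hjt hs
    have hjm : k j - 1 < m := by omega
    rw [BVaext_eq n (ξ ⊔ ν) hjm, Pi.sup_apply] at hkey
    rcases le_sup_iff.1 hkey with hcase | hcase
    · have hkey' : aext m n γ (k j + 1) ≤ aext m n ξ (k j) := by
        rw [BVaext_eq n ξ hjm]; exact hcase
      have hsξ := BVsigma_le hγ hbd hξΓ.1 hγξ hj1 hjt hkey'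
      obtain ⟨hz1, hz2⟩ := BVzeta_of_sigma hbd hγξ hj1 hjt hsξ
      by_cases hS : memS m n γ t k h j
      · exact hξz j hjt hS hz2
      · have hS' : memS m n γ t k h (j - 1) := by tauto
        exact hξz (j - 1) (by omega) hS' hz1
    · have hkey' : aext m n γ (k j + 1) ≤ aext m n ν (k j) := by
        rw [BVaext_eq n ν hjm]; exact hcase
      have hsν := BVsigma_le hγ hbd hνΓ.1 hγν hj1 hjt hkey'
      obtain ⟨hz1, hz2⟩ := BVzeta_of_sigma hbd hγν hj1 hjt hsν
      by_cases hS : memS m n γ t k h j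
      · have hS' : ¬ memS m n γ t k h (j - 1) := by tauto
        exact hνz (j - 1) (by omega) hS' hz1
      · exact hνz j hjt hS hz2
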